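/- arXiv:1912.08711 — 5 statements merged into one kernel-verified Lean document; each statement's English description precedes it below -/
import Mathlib

section
/- Let n ≥ 1, let A be a real symmetric positive definite n×n matrix, q ∈ ℝⁿ, e ∈ ℝⁿ a unit vector, and C > 1. Define the density m(x) := C (2π)^{−n} π^{n/2} (det A)^{−1/2} exp(−(1/4)⟨A⁻¹(x−q),(x−q)⟩) on ℝⁿ, and W(s) := (1/s) ln ∫_{ℝⁿ} e^{s x·e} m(x) dx for s > 0. Then the infimum of W over s > 0 equals 2 √(⟨Ae,e⟩ · ln C) + e·q, and the infimum is attained at s* = √((ln C)/⟨Ae,e⟩). -/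
open MeasureTheory Matrix

lemma contQuad {n : ℕ} (M : Matrix (Fin n) (Fin n) ℝ) :
    Continuous fun y : Fin n → ℝ => y ⬝ᵥ M *ᵥ y := by
  simp only [dotProduct, mulVec]
  exact continuous_finset_sum _ fun i _ => (continuous_apply i).mul
    (continuous_finset_sum _ fun j _ => (continuous_const.mul (continuous_apply j)))

lemma gauss_pi (n : ℕ) :
    ∫ y : Fin n → ℝ, Real.exp (-(1/4) * (y ⬝ᵥ y)) = (2 * Real.sqrt Real.pi) ^ n := by
  have h : ∀ y : Fin n → ℝ, Real.exp (-(1/4) * (y ⬝ᵥ y))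
      = ∏ i, Real.exp (-(1/4) * (y i)^2) := by
    intro y
    rw [← Real.exp_sum]
    congr 1
    simp [dotProduct, Finset.mul_sum]
    ring_nf
  simp_rw [h]
  rw [volume_pi, integral_fintype_prod_eq_pow (ι := Fin n) (fun t : ℝ => Real.exp (-(1/4) * t^2))]
  have : ∫ t : ℝ, Real.exp (-(1/4) * t^2) = 2 * Real.sqrt Real.pi := by
    rw [integral_gaussian (1/4)]
    rw [show Real.pi / (1/4) = 2^2 * Real.pi by ring]
    rw [Real.sqrt_mul (by positivity), Real.sqrt_sq (by norm_num)]
  rw [this, Fintype.card_fin]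

lemma cov {n : ℕ} (S : Matrix (Fin n) (Fin n) ℝ) (hS : S.det ≠ 0)
    (g : (Fin n → ℝ) → ℝ) (hg : Continuous g) :
    ∫ x : Fin n → ℝ, g x = |S.det| * ∫ y : Fin n → ℝ, g (S *ᵥ y) := by
  have hmap := Real.map_matrix_volume_pi_eq_smul_volume_pi hS
  have h1 : ∫ y : Fin n → ℝ, g (S *ᵥ y) = ∫ y : Fin n → ℝ, g (Matrix.toLin' S y) := by
    simp_rw [Matrix.toLin'_apply]
  have h2 : ∫ y : Fin n → ℝ, g (Matrix.toLin' S y)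
      = ∫ x, g x ∂(Measure.map (Matrix.toLin' S) volume) := by
    rw [integral_map]
    · exact (Matrix.toLin' S).continuous_of_finiteDimensional.measurable.aemeasurable
    · exact hg.aestronglyMeasurable
  rw [h1, h2, hmap, integral_smul_measure, ENNReal.toReal_ofReal (by positivity), smul_eq_mul]
  rw [← mul_assoc, abs_inv, mul_inv_cancel₀ (by simpa using hS), one_mul]

lemma mulVec_dot {n : ℕ} (M : Matrix (Fin n) (Fin n) ℝ) (u v : Fin n → ℝ) :
    (M *ᵥ u) ⬝ᵥ v = u ⬝ᵥ Mᵀ *ᵥ v := by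
  rw [dotProduct_comm, dotProduct_mulVec, dotProduct_comm, ← mulVec_transpose]

lemma normConst (n : ℕ) (C d : ℝ) (hd : 0 < d) :
    (C * ((2 * Real.pi) ^ n)⁻¹ * Real.pi ^ ((n : ℝ) / 2) / Real.sqrt d) *
      (Real.sqrt d * (2 * Real.sqrt Real.pi) ^ n) = C := by
  have hπ := Real.pi_pos
  have hsd : Real.sqrt d ≠ 0 := by positivity
  have h1 : (Real.sqrt Real.pi)^n = Real.pi ^ ((n:ℝ)/2) := by
    rw [← Real.rpow_natCast (Real.sqrt Real.pi) n, Real.sqrt_eq_rpow,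
      ← Real.rpow_mul hπ.le, show (1/2:ℝ)*(n:ℝ) = (n:ℝ)/2 by ring]
  have h2 : Real.pi ^ ((n:ℝ)/2) * Real.pi ^ ((n:ℝ)/2) = Real.pi ^ n := by
    rw [← Real.rpow_add hπ, show (n:ℝ)/2 + (n:ℝ)/2 = (n:ℝ) by ring, Real.rpow_natCast]
  have h3 : ((2:ℝ) * Real.pi) ^ n ≠ 0 := by positivity
  rw [mul_pow 2 (Real.sqrt Real.pi) n, h1]
  field_simp
  rw [mul_pow 2 Real.pi n]
  linear_combination (C * 2^n) * h2

/-- Spreading speed formula for the linearized local model: the infimum over `s > 0` of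
`W(s) = (1/s) ln ∫ e^{s x·e} m(x) dx` equals `2√(⟨Ae,e⟩ ln C) + e·q` and is attained
at `s* = √(ln C / ⟨Ae,e⟩)`. -/
theorem spreading_speed_local
    (n : ℕ) (hn : 1 ≤ n) (A : Matrix (Fin n) (Fin n) ℝ)
    (hsymm : A.IsSymm) (hA : A.PosDef) (q : Fin n → ℝ)
    (e : Fin n → ℝ) (he : e ⬝ᵥ e = 1) (C : ℝ) (hC : 1 < C)
    (m : (Fin n → ℝ) → ℝ)
    (hm : ∀ x, m x = C * ((2 * Real.pi) ^ n)⁻¹ * Real.pi ^ ((n : ℝ) / 2) /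
        Real.sqrt A.det * Real.exp (-(1 / 4) * ((x - q) ⬝ᵥ A⁻¹ *ᵥ (x - q))))
    (W : ℝ → ℝ)
    (hW : ∀ s, W s = (1 / s) *
        Real.log (∫ x : Fin n → ℝ, Real.exp (s * (x ⬝ᵥ e)) * m x))
    (sstar : ℝ) (hsstar : sstar = Real.sqrt (Real.log C / (e ⬝ᵥ A *ᵥ e))) :
    (∀ s, 0 < s →
        2 * Real.sqrt ((e ⬝ᵥ A *ᵥ e) * Real.log C) + e ⬝ᵥ q ≤ W s) ∧
      0 < sstar ∧
      W sstar = 2 * Real.sqrt ((e ⬝ᵥ A *ᵥ e) * Real.log C) + e ⬝ᵥ q := by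
  have hπ := Real.pi_pos
  have hdet : (0:ℝ) < A.det := hA.det_pos
  have hC0 : (0:ℝ) < C := lt_trans one_pos hC
  have hL : 0 < Real.log C := Real.log_pos hC
  have he0 : e ≠ 0 := fun h => by simp [h] at he
  have ha : 0 < e ⬝ᵥ A *ᵥ e := by simpa using hA.re_dotProduct_pos he0
  have hAunit : IsUnit A.det := hdet.ne'.isUnit
  have hAinvsymm : A⁻¹ᵀ = A⁻¹ := by
    rw [Matrix.transpose_nonsing_inv, hsymm.eq]
  have hsymdot : ∀ u v : Fin n → ℝ, u ⬝ᵥ A⁻¹ *ᵥ v = v ⬝ᵥ A⁻¹ *ᵥ u := by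
    intro u v
    rw [dotProduct_mulVec, ← mulVec_transpose, hAinvsymm, dotProduct_comm]
  have hinvA : ∀ v : Fin n → ℝ, A⁻¹ *ᵥ A *ᵥ v = v := by
    intro v
    rw [Matrix.mulVec_mulVec, Matrix.nonsing_inv_mul A hAunit, Matrix.one_mulVec]
  -- square root of A
  open scoped MatrixOrder in
  set S := CFC.sqrt A with hSdef
  have hSmul : S * S = A := by
    open scoped MatrixOrder in
    exact CFC.sqrt_mul_sqrt_self A hA.posSemidef.nonneg
  have hSsymm : Sᵀ = S := by
    open scoped MatrixOrder in
    have := (CFC.sqrt_nonneg A).posSemidef.isHermitian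
    simpa [Matrix.IsHermitian] using this
  have hdetS : S.det * S.det = A.det := by rw [← Matrix.det_mul, hSmul]
  have hdetS0 : S.det ≠ 0 := by
    intro h; rw [h, zero_mul] at hdetS; exact hdet.ne' hdetS.symm
  have hSunit : IsUnit S.det := hdetS0.isUnit
  have habs : |S.det| = Real.sqrt A.det := by
    rw [← hdetS, ← abs_mul_abs_self S.det, Real.sqrt_mul_self (abs_nonneg _)]
  have hquad : ∀ y : Fin n → ℝ, (S *ᵥ y) ⬝ᵥ A⁻¹ *ᵥ (S *ᵥ y) = y ⬝ᵥ y := by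
    intro y
    rw [Matrix.mulVec_mulVec, mulVec_dot, Matrix.mulVec_mulVec, hSsymm]
    have h1 : S * A⁻¹ * S = 1 := by
      rw [Matrix.mul_assoc, ← hSmul, Matrix.mul_inv_rev, Matrix.mul_assoc S⁻¹,
        Matrix.nonsing_inv_mul S hSunit, Matrix.mul_one, Matrix.mul_nonsing_inv S hSunit]
    rw [← Matrix.mul_assoc, h1, Matrix.one_mulVec]
  -- the Gaussian normalization
  have hcont : Continuous fun x : Fin n → ℝ => Real.exp (-(1/4) * (x ⬝ᵥ A⁻¹ *ᵥ x)) :=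
    Real.continuous_exp.comp (continuous_const.mul (contQuad A⁻¹))
  have hZ : ∫ y : Fin n → ℝ, Real.exp (-(1/4) * (y ⬝ᵥ A⁻¹ *ᵥ y))
      = Real.sqrt A.det * (2 * Real.sqrt Real.pi) ^ n := by
    rw [cov S hdetS0 _ hcont]
    simp_rw [hquad]
    rw [gauss_pi, habs]
  -- key: value of the integral
  have key : ∀ s : ℝ, (∫ x : Fin n → ℝ, Real.exp (s * (x ⬝ᵥ e)) * m x)
      = C * Real.exp (s * (e ⬝ᵥ q) + s^2 * (e ⬝ᵥ A *ᵥ e)) := by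
    intro s
    set K : ℝ := C * ((2 * Real.pi) ^ n)⁻¹ * Real.pi ^ ((n : ℝ) / 2) / Real.sqrt A.det with hK
    set c : Fin n → ℝ := (2*s) • (A *ᵥ e) with hc
    set v₀ : Fin n → ℝ := q + c with hv₀
    have hAic : A⁻¹ *ᵥ c = (2*s) • e := by rw [hc, Matrix.mulVec_smul, hinvA]
    have hdotc : ∀ u : Fin n → ℝ, u ⬝ᵥ A⁻¹ *ᵥ c = 2*s*(u ⬝ᵥ e) := by
      intro u; rw [hAic, dotProduct_smul, smul_eq_mul]
    have hcc : c ⬝ᵥ A⁻¹ *ᵥ c = 4*s^2*(e ⬝ᵥ A *ᵥ e) := by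
      rw [hdotc c, hc, smul_dotProduct, smul_eq_mul, dotProduct_comm]
      ring
    have hQ : ∀ x : Fin n → ℝ, (x - v₀) ⬝ᵥ A⁻¹ *ᵥ (x - v₀)
        = (x - q) ⬝ᵥ A⁻¹ *ᵥ (x - q) - 4*s*((x-q) ⬝ᵥ e) + 4*s^2*(e ⬝ᵥ A *ᵥ e) := by
      intro x
      have hxv : x - v₀ = (x - q) - c := by rw [hv₀]; abel
      rw [hxv, Matrix.mulVec_sub, sub_dotProduct, dotProduct_sub, dotProduct_sub,
        hdotc (x - q), hsymdot c (x - q), hdotc (x - q), hcc]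
      ring
    have hpt : ∀ x : Fin n → ℝ, Real.exp (s * (x ⬝ᵥ e)) * m x
        = (K * Real.exp (s * (e ⬝ᵥ q) + s^2 * (e ⬝ᵥ A *ᵥ e)))
          * Real.exp (-(1/4) * ((x - v₀) ⬝ᵥ A⁻¹ *ᵥ (x - v₀))) := by
      intro x
      rw [hm x]
      calc Real.exp (s * (x ⬝ᵥ e)) * (K * Real.exp (-(1/4) * ((x - q) ⬝ᵥ A⁻¹ *ᵥ (x - q))))
          = K * (Real.exp (s * (x ⬝ᵥ e))
              * Real.exp (-(1/4) * ((x - q) ⬝ᵥ A⁻¹ *ᵥ (x - q)))) := by ring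
        _ = K * Real.exp (s * (x ⬝ᵥ e) + -(1/4) * ((x - q) ⬝ᵥ A⁻¹ *ᵥ (x - q))) := by
              rw [← Real.exp_add]
        _ = K * Real.exp ((s * (e ⬝ᵥ q) + s^2 * (e ⬝ᵥ A *ᵥ e))
              + -(1/4) * ((x - v₀) ⬝ᵥ A⁻¹ *ᵥ (x - v₀))) := by
              congr 1
              rw [hQ x, show x ⬝ᵥ e = (x - q) ⬝ᵥ e + q ⬝ᵥ e by rw [sub_dotProduct]; ring,
                dotProduct_comm e q]
              ring
        _ = K * (Real.exp (s * (e ⬝ᵥ q) + s^2 * (e ⬝ᵥ A *ᵥ e))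
              * Real.exp (-(1/4) * ((x - v₀) ⬝ᵥ A⁻¹ *ᵥ (x - v₀)))) := by
              rw [← Real.exp_add]
        _ = (K * Real.exp (s * (e ⬝ᵥ q) + s^2 * (e ⬝ᵥ A *ᵥ e)))
              * Real.exp (-(1/4) * ((x - v₀) ⬝ᵥ A⁻¹ *ᵥ (x - v₀))) := by ring
    simp only [hpt]
    rw [MeasureTheory.integral_const_mul]
    have htrans : ∫ x : Fin n → ℝ, Real.exp (-(1/4) * ((x - v₀) ⬝ᵥ A⁻¹ *ᵥ (x - v₀)))
        = ∫ y : Fin n → ℝ, Real.exp (-(1/4) * (y ⬝ᵥ A⁻¹ *ᵥ y)) :=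
      integral_sub_right_eq_self (fun y => Real.exp (-(1/4) * (y ⬝ᵥ A⁻¹ *ᵥ y))) v₀
    rw [htrans, hZ]
    calc K * Real.exp (s * (e ⬝ᵥ q) + s^2 * (e ⬝ᵥ A *ᵥ e))
          * (Real.sqrt A.det * (2 * Real.sqrt Real.pi) ^ n)
        = (K * (Real.sqrt A.det * (2 * Real.sqrt Real.pi) ^ n))
            * Real.exp (s * (e ⬝ᵥ q) + s^2 * (e ⬝ᵥ A *ᵥ e)) := by ring
      _ = C * Real.exp (s * (e ⬝ᵥ q) + s^2 * (e ⬝ᵥ A *ᵥ e)) := by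
            rw [hK, normConst n C A.det hdet]
  -- W formula
  have hWs : ∀ s : ℝ, 0 < s →
      W s = Real.log C / s + e ⬝ᵥ q + s * (e ⬝ᵥ A *ᵥ e) := by
    intro s hs
    rw [hW, key s, Real.log_mul hC0.ne' (Real.exp_pos _).ne', Real.log_exp]
    field_simp
    ring
  have hsp : 0 < sstar := by
    rw [hsstar]; exact Real.sqrt_pos.mpr (div_pos hL ha)
  refine ⟨?_, hsp, ?_⟩
  · intro s hs
    rw [hWs s hs]
    have h1 : Real.sqrt (s * (e ⬝ᵥ A *ᵥ e)) ^ 2 = s * (e ⬝ᵥ A *ᵥ e) :=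
      Real.sq_sqrt (by positivity)
    have h2 : Real.sqrt (Real.log C / s) ^ 2 = Real.log C / s :=
      Real.sq_sqrt (by positivity)
    have h3 : Real.sqrt (s * (e ⬝ᵥ A *ᵥ e)) * Real.sqrt (Real.log C / s)
        = Real.sqrt ((e ⬝ᵥ A *ᵥ e) * Real.log C) := by
      rw [← Real.sqrt_mul (by positivity)]
      congr 1
      field_simp
    nlinarith [sq_nonneg (Real.sqrt (s * (e ⬝ᵥ A *ᵥ e)) - Real.sqrt (Real.log C / s))]
  · rw [hWs sstar hsp]
    have hss2 : sstar^2 = Real.log C / (e ⬝ᵥ A *ᵥ e) := by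
      rw [hsstar]; exact Real.sq_sqrt (div_pos hL ha).le
    have hprod : Real.sqrt ((e ⬝ᵥ A *ᵥ e) * Real.log C) * sstar = Real.log C := by
      rw [hsstar, ← Real.sqrt_mul (by positivity),
        show (e ⬝ᵥ A *ᵥ e) * Real.log C * (Real.log C / (e ⬝ᵥ A *ᵥ e)) = (Real.log C)^2 by
          field_simp]
      exact Real.sqrt_sq hL.le
    have hdiv : Real.log C / sstar = Real.sqrt ((e ⬝ᵥ A *ᵥ e) * Real.log C) :=
      (div_eq_iff hsp.ne').mpr hprod.symm
    have hmul : sstar * (e ⬝ᵥ A *ᵥ e) = Real.sqrt ((e ⬝ᵥ A *ᵥ e) * Real.log C) := by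
      have h4 : sstar * (e ⬝ᵥ A *ᵥ e) * sstar
          = Real.sqrt ((e ⬝ᵥ A *ᵥ e) * Real.log C) * sstar := by
        rw [hprod, show sstar * (e ⬝ᵥ A *ᵥ e) * sstar = (e ⬝ᵥ A *ᵥ e) * sstar^2 by ring,
          hss2]
        field_simp
      exact mul_right_cancel₀ hsp.ne' h4
    rw [hdiv, hmul]
    ring
end

section
/- Let α > 0 and β > 0. Let N > 0 and 0 < a ≤ N with a ≤ βN, and let f be a continuous function on [a, N] with 0 < f(ω) ≤ αω for all ω ∈ [a, N]. If ∫_a^N dω/f(ω) = 1, then β e^{α} ≥ 1. -/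
open MeasureTheory intervalIntegral

/-- Necessary condition for a positive equilibrium of the impulsive model:
if `∫_a^N dω/f(ω) = 1` with `0 < f(ω) ≤ αω` on `[a,N]`, `0 < a ≤ N` and `a ≤ βN`,
then `β e^α ≥ 1`. -/
theorem equilibrium_necessary_condition
    (α β N a : ℝ) (hα : 0 < α) (hβ : 0 < β) (hN : 0 < N)
    (ha : 0 < a) (haN : a ≤ N) (haβ : a ≤ β * N)
    (f : ℝ → ℝ) (hf : ContinuousOn f (Set.Icc a N))
    (hfpos : ∀ ω ∈ Set.Icc a N, 0 < f ω)
    (hfle : ∀ ω ∈ Set.Icc a N, f ω ≤ α * ω)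
    (hint : (∫ ω in a..N, (f ω)⁻¹) = 1) :
    1 ≤ β * Real.exp α := by
  have huIcc : Set.uIcc a N = Set.Icc a N := Set.uIcc_of_le haN
  -- ∫ (α ω)⁻¹ = α⁻¹ * log (N/a)
  have hne : (0:ℝ) ∉ Set.uIcc a N := by
    rw [huIcc]; intro h; exact absurd (Set.mem_Icc.1 h).1 (not_le.2 ha)
  have hlog : (∫ ω in a..N, (α * ω)⁻¹) = α⁻¹ * Real.log (N / a) := by
    have : (∫ ω in a..N, (α * ω)⁻¹) = α⁻¹ * ∫ ω in a..N, ω⁻¹ := by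
      rw [← intervalIntegral.integral_const_mul]
      congr 1; ext ω; rw [mul_inv]
    rw [this, integral_inv hne]
  -- pointwise bound
  have hcontg : ContinuousOn (fun ω => (f ω)⁻¹) (Set.uIcc a N) := by
    rw [huIcc]
    exact hf.inv₀ (fun x hx => (hfpos x hx).ne')
  have hconth : ContinuousOn (fun ω => (α * ω)⁻¹) (Set.uIcc a N) := by
    rw [huIcc]
    exact (continuousOn_const.mul continuousOn_id).inv₀
      (fun x hx => (mul_pos hα (lt_of_lt_of_le ha (Set.mem_Icc.1 hx).1)).ne')
  have hmono : (∫ ω in a..N, (α * ω)⁻¹) ≤ ∫ ω in a..N, (f ω)⁻¹ := by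
    apply intervalIntegral.integral_mono_on haN
      (hconth.intervalIntegrable) (hcontg.intervalIntegrable)
    intro x hx
    exact inv_anti₀ (hfpos x hx) (hfle x hx)
  rw [hint, hlog] at hmono
  have hlogle : Real.log (N / a) ≤ α := by
    have := mul_le_mul_of_nonneg_left hmono hα.le
    rwa [mul_one, ← mul_assoc, mul_inv_cancel₀ hα.ne', one_mul] at this
  have hNa : N / a ≤ Real.exp α := by
    calc N / a = Real.exp (Real.log (N / a)) := (Real.exp_log (div_pos hN ha)).symm
    _ ≤ Real.exp α := Real.exp_le_exp.2 hlogle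
  calc (1:ℝ) ≤ β * N / a := by
        rw [le_div_iff₀ ha, one_mul]
        linarith
    _ = β * (N / a) := by ring
    _ ≤ β * Real.exp α := by nlinarith
end

section
/- Let r > 0 and 0 < s < 1 satisfy e^{r}(1−s) > 1, and define N* := ((1−s)e^{r} − 1) / ((1−s)(e^{r} − 1)). Then 0 < (1−s)N* < N* < 1 and ∫_{(1−s)N*}^{N*} dω / (r ω (1−ω)) = 1. -/
open MeasureTheory intervalIntegral

/-- The positive equilibrium `N* = ((1−s)e^r − 1)/((1−s)(e^r − 1))` of the impulsive
fire–logistic model satisfies `0 < (1−s)N* < N* < 1` and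
`∫_{(1−s)N*}^{N*} dω/(rω(1−ω)) = 1`. -/
theorem fire_logistic_equilibrium
    (r s : ℝ) (hr : 0 < r) (hs0 : 0 < s) (hs1 : s < 1)
    (hcond : 1 < Real.exp r * (1 - s))
    (Nstar : ℝ)
    (hNstar : Nstar = ((1 - s) * Real.exp r - 1) / ((1 - s) * (Real.exp r - 1))) :
    0 < (1 - s) * Nstar ∧ (1 - s) * Nstar < Nstar ∧ Nstar < 1 ∧
      (∫ ω in ((1 - s) * Nstar)..Nstar, (r * ω * (1 - ω))⁻¹) = 1 := by
  set a := 1 - s with ha_def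
  set E := Real.exp r with hE_def
  have ha : 0 < a := by linarith
  have ha1 : a < 1 := by simp [ha_def]; linarith
  have hE : 1 < E := by rw [hE_def]; exact Real.one_lt_exp_iff.mpr hr
  have haE : 1 < a * E := by nlinarith [hcond]
  have hd : 0 < a * (E - 1) := by nlinarith
  have hNpos : 0 < Nstar := by
    rw [hNstar]
    apply div_pos; nlinarith; exact hd
  have hN1 : Nstar < 1 := by
    rw [hNstar, div_lt_one hd]; nlinarith
  have hxpos : 0 < a * Nstar := mul_pos ha hNpos
  have hxlt : a * Nstar < Nstar := by nlinarith
  have hx1 : a * Nstar < 1 := lt_trans hxlt hN1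
  refine ⟨hxpos, hxlt, hN1, ?_⟩
  -- the key algebraic identity
  have hxy : Nstar * (1 - a * Nstar) = E * ((a * Nstar) * (1 - Nstar)) := by
    rw [hNstar]
    have hd' : a * (E - 1) ≠ 0 := ne_of_gt hd
    have hE1 : E - 1 ≠ 0 := ne_of_gt (by linarith)
    have ha0 : a ≠ 0 := ne_of_gt ha
    field_simp
    ring
  -- antiderivative
  set F : ℝ → ℝ := fun ω => (Real.log ω - Real.log (1 - ω)) / r with hF
  have hmem : ∀ ω ∈ Set.uIcc (a * Nstar) Nstar, 0 < ω ∧ ω < 1 := by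
    intro ω hω
    rw [Set.uIcc_of_le hxlt.le] at hω
    exact ⟨lt_of_lt_of_le hxpos hω.1, lt_of_le_of_lt hω.2 hN1⟩
  have hderiv : ∀ ω ∈ Set.uIcc (a * Nstar) Nstar,
      HasDerivAt F ((r * ω * (1 - ω))⁻¹) ω := by
    intro ω hω
    obtain ⟨h0, h1⟩ := hmem ω hω
    have h1' : (0:ℝ) < 1 - ω := by linarith
    have hsub : HasDerivAt (fun x : ℝ => 1 - x) (-1) ω := by
      simpa using (hasDerivAt_id ω).const_sub 1
    have hlog2 : HasDerivAt (fun x : ℝ => Real.log (1 - x)) (-1 / (1 - ω)) ω :=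
      hsub.log (ne_of_gt h1')
    have := ((Real.hasDerivAt_log (ne_of_gt h0)).sub hlog2).div_const r
    refine this.congr_deriv ?_
    have := h0.ne'; have := h1'.ne'; have := hr.ne'
    field_simp
    ring
  have hint : IntervalIntegrable (fun ω => (r * ω * (1 - ω))⁻¹) volume
      (a * Nstar) Nstar := by
    apply ContinuousOn.intervalIntegrable
    apply ContinuousOn.inv₀
    · fun_prop
    · intro ω hω
      obtain ⟨h0, h1⟩ := hmem ω hω
      have : 0 < r * ω * (1 - ω) := mul_pos (mul_pos hr h0) (by linarith)
      exact ne_of_gt this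
  rw [intervalIntegral.integral_eq_sub_of_hasDerivAt hderiv hint]
  -- compute F Nstar - F (a * Nstar) = 1
  have hy1 : (0:ℝ) < 1 - Nstar := by linarith
  have hx1' : (0:ℝ) < 1 - a * Nstar := by linarith
  have hlog : Real.log (Nstar * (1 - a * Nstar))
      = Real.log (E * ((a * Nstar) * (1 - Nstar))) := by rw [hxy]
  rw [Real.log_mul (ne_of_gt hNpos) (ne_of_gt hx1'),
      Real.log_mul (ne_of_gt (Real.exp_pos r)) (ne_of_gt (mul_pos hxpos hy1)),
      Real.log_mul (ne_of_gt hxpos) (ne_of_gt hy1)] at hlog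
  have hlogE : Real.log E = r := Real.log_exp r
  simp only [hF]
  field_simp
  rw [mul_comm Nstar a]
  simp only [Real.log_exp] at hlog
  linarith
end

section
/- Let α > 0, γ ≤ 0, and c ≥ 0. Define u : [0,1] → ℝ by u(t) := α c e^{αt} / (α − γ c (e^{αt} − 1)). Then the denominator α − γ c (e^{αt} − 1) is positive for all t ∈ [0,1], u(0) = c, u is differentiable with u'(t) = α u(t) + γ u(t)² for all t ∈ [0,1], and u(1) = α c / ((e^{−α} − 1) γ c + α e^{−α}). -/
/-- Explicit solution of the spatially constant impulsive model:
`u(t) = αce^{αt}/(α − γc(e^{αt} − 1))` has positive denominator on `[0,1]`,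
satisfies `u(0) = c`, solves `u' = αu + γu²` on `[0,1]`, and
`u(1) = αc/((e^{−α} − 1)γc + αe^{−α})`. -/
theorem explicit_solution_nonspatial
    (α γ c : ℝ) (hα : 0 < α) (hγ : γ ≤ 0) (hc : 0 ≤ c)
    (u : ℝ → ℝ)
    (hu : ∀ t, u t = α * c * Real.exp (α * t) / (α - γ * c * (Real.exp (α * t) - 1))) :
    (∀ t ∈ Set.Icc (0 : ℝ) 1, 0 < α - γ * c * (Real.exp (α * t) - 1)) ∧
      u 0 = c ∧
      (∀ t ∈ Set.Icc (0 : ℝ) 1, HasDerivAt u (α * u t + γ * (u t) ^ 2) t) ∧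
      u 1 = α * c / ((Real.exp (-α) - 1) * γ * c + α * Real.exp (-α)) := by
  have hden : ∀ t ∈ Set.Icc (0 : ℝ) 1, 0 < α - γ * c * (Real.exp (α * t) - 1) := by
    intro t ht
    have h1 : (1 : ℝ) ≤ Real.exp (α * t) := by
      rw [← Real.exp_zero]
      exact Real.exp_le_exp.mpr (mul_nonneg hα.le ht.1)
    have : γ * c * (Real.exp (α * t) - 1) ≤ 0 :=
      mul_nonpos_of_nonpos_of_nonneg (mul_nonpos_of_nonpos_of_nonneg hγ hc) (by linarith)
    linarith
  refine ⟨hden, ?_, ?_, ?_⟩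
  · rw [hu 0]
    field_simp
    simp [hα.ne']
  · intro t ht
    have hD := (hden t ht).ne'
    have hexp : HasDerivAt (fun s : ℝ => Real.exp (α * s)) (Real.exp (α * t) * α) t := by
      simpa [Function.comp_def] using (Real.hasDerivAt_exp (α * t)).comp t ((hasDerivAt_id t).const_mul α)
    have hN : HasDerivAt (fun s : ℝ => α * c * Real.exp (α * s))
        (α * c * (Real.exp (α * t) * α)) t := hexp.const_mul _
    have hDd : HasDerivAt (fun s : ℝ => α - γ * c * (Real.exp (α * s) - 1))
        (-(γ * c * (Real.exp (α * t) * α))) t := by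
      simpa using (((hexp.sub_const 1).const_mul (γ * c)).const_sub α)
    have := hN.div hDd hD
    have heq : HasDerivAt u
        ((α * c * (Real.exp (α * t) * α) * (α - γ * c * (Real.exp (α * t) - 1)) -
          α * c * Real.exp (α * t) * -(γ * c * (Real.exp (α * t) * α))) /
          (α - γ * c * (Real.exp (α * t) - 1)) ^ 2) t := by
      refine HasDerivAt.congr_of_eventuallyEq this ?_
      filter_upwards with s using (hu s)
    convert heq using 1
    rw [hu t]
    field_simp
    ring
  · rw [hu 1]
    have h1 : (0:ℝ) < α - γ * c * (Real.exp (α * 1) - 1) := hden 1 (by norm_num)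
    have he : Real.exp (-α) = (Real.exp α)⁻¹ := Real.exp_neg α
    have hepos := Real.exp_pos α
    have h2 : (Real.exp (-α) - 1) * γ * c + α * Real.exp (-α)
        = (α - γ * c * (Real.exp α - 1)) * (Real.exp α)⁻¹ := by
      rw [he]; field_simp; ring
    rw [mul_one, h2]
    rw [div_mul_eq_div_div_swap, div_inv_eq_mul]
end

section
/- Let a > 0, b > 0 and θ ∈ [0, π/2]. Then the minimum of √(a² x₁² + b² x₂²) / (x₁ cos θ + x₂ sin θ), taken over all unit vectors (x₁, x₂) ∈ ℝ² with x₁ cos θ + x₂ sin θ > 0, exists (is attained) and equals a b / √(a² sin² θ + b² cos² θ). -/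
theorem ray_speed_min_aux
    (a b c s : ℝ) (ha : 0 < a) (hb : 0 < b) (hcs : s ^ 2 + c ^ 2 = 1) :
    IsLeast
      {v : ℝ | ∃ x₁ x₂ : ℝ, x₁ ^ 2 + x₂ ^ 2 = 1 ∧
        0 < x₁ * c + x₂ * s ∧
        v = Real.sqrt (a ^ 2 * x₁ ^ 2 + b ^ 2 * x₂ ^ 2) / (x₁ * c + x₂ * s)}
      (a * b / Real.sqrt (a ^ 2 * s ^ 2 + b ^ 2 * c ^ 2)) := by
  have hD : 0 < a ^ 2 * s ^ 2 + b ^ 2 * c ^ 2 := by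
    by_cases h : s = 0
    · have h1 : c ^ 2 = 1 := by rw [h] at hcs; linarith
      rw [h, h1]; positivity
    · have hs2 : 0 < s ^ 2 := by positivity
      nlinarith [sq_nonneg (b * c), pow_pos ha 2]
  have hE : 0 < b ^ 4 * c ^ 2 + a ^ 4 * s ^ 2 := by
    by_cases h : s = 0
    · have h1 : c ^ 2 = 1 := by rw [h] at hcs; linarith
      rw [h, h1]; positivity
    · have hs2 : 0 < s ^ 2 := by positivity
      nlinarith [sq_nonneg (b ^ 2 * c), pow_pos ha 4]
  have hRD : 0 < Real.sqrt (a ^ 2 * s ^ 2 + b ^ 2 * c ^ 2) := Real.sqrt_pos.mpr hD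
  have hRD2 : Real.sqrt (a ^ 2 * s ^ 2 + b ^ 2 * c ^ 2) ^ 2
      = a ^ 2 * s ^ 2 + b ^ 2 * c ^ 2 := Real.sq_sqrt hD.le
  have hRE : 0 < Real.sqrt (b ^ 4 * c ^ 2 + a ^ 4 * s ^ 2) := Real.sqrt_pos.mpr hE
  have hRE2 : Real.sqrt (b ^ 4 * c ^ 2 + a ^ 4 * s ^ 2) ^ 2
      = b ^ 4 * c ^ 2 + a ^ 4 * s ^ 2 := Real.sq_sqrt hE.le
  set RD := Real.sqrt (a ^ 2 * s ^ 2 + b ^ 2 * c ^ 2) with hRDd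
  set RE := Real.sqrt (b ^ 4 * c ^ 2 + a ^ 4 * s ^ 2) with hREd
  clear_value RD RE
  constructor
  · refine ⟨b ^ 2 * c / RE, a ^ 2 * s / RE, ?_, ?_, ?_⟩
    · field_simp
      linear_combination -hRE2
    · have hp : b ^ 2 * c / RE * c + a ^ 2 * s / RE * s
          = (a ^ 2 * s ^ 2 + b ^ 2 * c ^ 2) / RE := by field_simp; ring
      rw [hp]
      exact div_pos hD hRE
    · have hp : b ^ 2 * c / RE * c + a ^ 2 * s / RE * s
          = (a ^ 2 * s ^ 2 + b ^ 2 * c ^ 2) / RE := by field_simp; ring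
      have hnum : a ^ 2 * (b ^ 2 * c / RE) ^ 2 + b ^ 2 * (a ^ 2 * s / RE) ^ 2
          = (a * b * RD / RE) ^ 2 := by
        field_simp
        linear_combination (-1) * hRD2
      rw [hp, hnum, Real.sqrt_sq (by positivity)]
      have hD0 : a ^ 2 * s ^ 2 + b ^ 2 * c ^ 2 ≠ 0 := hD.ne'
      field_simp
      linear_combination (-1) * hRD2
  · rintro v ⟨x₁, x₂, hx, hp, rfl⟩
    rw [div_le_div_iff₀ hRD hp]
    have hN : 0 ≤ a ^ 2 * x₁ ^ 2 + b ^ 2 * x₂ ^ 2 := by positivity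
    calc a * b * (x₁ * c + x₂ * s)
        = Real.sqrt ((a * b * (x₁ * c + x₂ * s)) ^ 2) := by
          rw [Real.sqrt_sq (by positivity)]
      _ ≤ Real.sqrt ((a ^ 2 * x₁ ^ 2 + b ^ 2 * x₂ ^ 2)
            * (a ^ 2 * s ^ 2 + b ^ 2 * c ^ 2)) := by
          apply Real.sqrt_le_sqrt
          nlinarith [sq_nonneg (a ^ 2 * x₁ * s - b ^ 2 * x₂ * c)]
      _ = Real.sqrt (a ^ 2 * x₁ ^ 2 + b ^ 2 * x₂ ^ 2) * RD := by
          rw [hRDd]; exact Real.sqrt_mul hN _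

/-- The Freidlin–Gärtner ray-speed minimization: for `a, b > 0` and `θ ∈ [0, π/2]`,
the minimum of `√(a²x₁² + b²x₂²)/(x₁ cos θ + x₂ sin θ)` over unit vectors `(x₁,x₂)`
with `x₁ cos θ + x₂ sin θ > 0` is attained and equals `ab/√(a² sin²θ + b² cos²θ)`. -/
theorem ray_speed_minimization
    (a b θ : ℝ) (ha : 0 < a) (hb : 0 < b)
    (hθ : θ ∈ Set.Icc (0 : ℝ) (Real.pi / 2)) :
    IsLeast
      {v : ℝ | ∃ x₁ x₂ : ℝ, x₁ ^ 2 + x₂ ^ 2 = 1 ∧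
        0 < x₁ * Real.cos θ + x₂ * Real.sin θ ∧
        v = Real.sqrt (a ^ 2 * x₁ ^ 2 + b ^ 2 * x₂ ^ 2) /
              (x₁ * Real.cos θ + x₂ * Real.sin θ)}
      (a * b / Real.sqrt (a ^ 2 * Real.sin θ ^ 2 + b ^ 2 * Real.cos θ ^ 2)) := by
  exact ray_speed_min_aux a b (Real.cos θ) (Real.sin θ) ha hb (Real.sin_sq_add_cos_sq θ)
end
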